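/- Let M be a weight sequence satisfying (M.2): M_{p+q} ≤ C₀ H^{p+q} M_p M_q, and let E, F be Banach spaces with a bilinear map * : E × F → E satisfying ‖f*g‖_E ≤ ‖f‖_E ‖g‖_F. Suppose further (f_α)_{α∈ℕ^d} satisfies sup_α (2ℓH)^{|α|} M_α ‖f_α‖_E < ∞ and ψ is such that for all multi-indices δ, ψ^{(δ)} ∈ F with sup_δ ‖ψ^{(δ)}‖_F / ((ℓ/H)^{|δ|} M_δ) < ∞. Then for every γ ∈ ℕ^d, the series Σ_α f_α * ψ^{(α+γ)} converges absolutely in E and its norm is bounded by 2^d C₀ ℓ^{|γ|} M_γ times the product of the two suprema. -/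

import Mathlib

lemma aux_hasSum (d : ℕ) :
    HasSum (fun α : Fin d → ℕ => (2:ℝ)⁻¹ ^ ∑ i, α i) (2 ^ d) := by
  induction d with
  | zero =>
      have h : (fun α : Fin 0 → ℕ => (2:ℝ)⁻¹ ^ ∑ i, α i) = fun _ => (1:ℝ) := by
        funext α; simp
      rw [h]
      simpa using hasSum_unique (f := fun _ : Fin 0 → ℕ => (1:ℝ))
  | succ n ih =>
      have hgeo : HasSum (fun k : ℕ => (2:ℝ)⁻¹ ^ k) 2 := by
        have := hasSum_geometric_of_lt_one (r := (2:ℝ)⁻¹) (by norm_num) (by norm_num)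
        norm_num at this
        convert this using 1
        norm_num
      have hsummable : Summable fun p : ℕ × (Fin n → ℕ) =>
          (2:ℝ)⁻¹ ^ p.1 * (2:ℝ)⁻¹ ^ ∑ i, p.2 i := by
        apply Summable.mul_of_nonneg hgeo.summable ih.summable <;>
          intro x <;> positivity
      have hmul := hgeo.mul ih hsummable
      have hres := (Fin.consEquiv (fun _ : Fin (n+1) => ℕ)).symm.hasSum_iff.mpr hmul
      have heq : ((fun p : ℕ × (Fin n → ℕ) => (2:ℝ)⁻¹ ^ p.1 * (2:ℝ)⁻¹ ^ ∑ i, p.2 i) ∘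
          (Fin.consEquiv (fun _ : Fin (n+1) => ℕ)).symm) = fun α : Fin (n+1) → ℕ => (2:ℝ)⁻¹ ^ ∑ i, α i := by
        funext α
        simp [Fin.consEquiv, Fin.sum_univ_succ, pow_add, Fin.tail]
      rw [heq] at hres
      rw [pow_succ']
      exact hres

/-- For `(f_α) ∈ Λ_{M,2ℓH}(E)` and a family `ψ^{(δ)}` with Roumieu-type bounds,
the series `Σ_α f_α * ψ^{(α+γ)}` converges absolutely in `E` with the norm bound
`2^d C₀ ℓ^{|γ|} M_γ` times the product of the bounds. -/
theorem stmt11 (d : ℕ) {E F : Type*} [NormedAddCommGroup E] [NormedSpace ℝ E]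
    [CompleteSpace E] [NormedAddCommGroup F] [NormedSpace ℝ F]
    (M : ℕ → ℝ) (C₀ H : ℝ) (hpos : ∀ p, 0 < M p)
    (hC₀ : 1 ≤ C₀) (hH : 1 ≤ H)
    (hM2 : ∀ p q : ℕ, M (p + q) ≤ C₀ * H ^ (p + q) * M p * M q)
    (B : E → F → E) (hB : ∀ (e : E) (f : F), ‖B e f‖ ≤ ‖e‖ * ‖f‖)
    (ℓ : ℝ) (hℓ : 0 < ℓ)
    (f : (Fin d → ℕ) → E) (ψd : (Fin d → ℕ) → F) (Cf Cg : ℝ)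
    (hf : ∀ α : Fin d → ℕ, (2 * ℓ * H) ^ (∑ i, α i) * M (∑ i, α i) * ‖f α‖ ≤ Cf)
    (hψ : ∀ δ : Fin d → ℕ, ‖ψd δ‖ ≤ Cg * (ℓ / H) ^ (∑ i, δ i) * M (∑ i, δ i)) :
    ∀ γ : Fin d → ℕ,
      Summable (fun α : Fin d → ℕ => ‖B (f α) (ψd (α + γ))‖) ∧
      ‖∑' α : Fin d → ℕ, B (f α) (ψd (α + γ))‖ ≤
        2 ^ d * C₀ * ℓ ^ (∑ i, γ i) * M (∑ i, γ i) * Cf * Cg := by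
  intro γ
  have hH0 : (0:ℝ) < H := lt_of_lt_of_le one_pos hH
  have hCf : 0 ≤ Cf := by
    refine le_trans ?_ (hf 0)
    have := hpos (∑ i, (0 : Fin d → ℕ) i)
    positivity
  have hCg : 0 ≤ Cg := by
    have h := hψ 0
    simp at h
    nlinarith [norm_nonneg (ψd 0), hpos 0]
  set g : ℕ := ∑ i, γ i with hg
  set C : ℝ := C₀ * ℓ ^ g * M g * Cf * Cg with hC
  have hCnn : 0 ≤ C := by
    have := hpos g
    positivity
  -- pointwise bound
  have key : ∀ α : Fin d → ℕ,
      ‖B (f α) (ψd (α + γ))‖ ≤ C * (2:ℝ)⁻¹ ^ ∑ i, α i := by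
    intro α
    set a : ℕ := ∑ i, α i with ha
    have hsum : (∑ i, (α + γ) i) = a + g := by
      simp [ha, hg, Finset.sum_add_distrib]
    have hMa := hpos a
    have hMg := hpos g
    have hMag := hpos (a + g)
    have hfb : ‖f α‖ ≤ Cf / ((2 * ℓ * H) ^ a * M a) := by
      rw [le_div_iff₀ (by positivity)]
      calc ‖f α‖ * ((2 * ℓ * H) ^ a * M a)
          = (2 * ℓ * H) ^ a * M a * ‖f α‖ := by ring
        _ ≤ Cf := hf α
    have hψb : ‖ψd (α + γ)‖ ≤ Cg * (ℓ / H) ^ (a + g) * M (a + g) := by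
      have := hψ (α + γ)
      rwa [hsum] at this
    have hstep : ‖B (f α) (ψd (α + γ))‖ ≤
        (Cf / ((2 * ℓ * H) ^ a * M a)) * (Cg * (ℓ / H) ^ (a + g) * M (a + g)) := by
      refine le_trans (hB _ _) (mul_le_mul hfb hψb (norm_nonneg _) (by positivity))
    have hM2' : M (a + g) ≤ C₀ * H ^ (a + g) * M a * M g := hM2 a g
    have hstep2 : (Cf / ((2 * ℓ * H) ^ a * M a)) * (Cg * (ℓ / H) ^ (a + g) * M (a + g)) ≤
        (Cf / ((2 * ℓ * H) ^ a * M a)) * (Cg * (ℓ / H) ^ (a + g) *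
          (C₀ * H ^ (a + g) * M a * M g)) := by
      have h1 : 0 ≤ Cf / ((2 * ℓ * H) ^ a * M a) := by positivity
      have h2 : 0 ≤ Cg * (ℓ / H) ^ (a + g) := by positivity
      nlinarith [mul_le_mul_of_nonneg_left hM2' h2]
    have heq : (Cf / ((2 * ℓ * H) ^ a * M a)) * (Cg * (ℓ / H) ^ (a + g) *
          (C₀ * H ^ (a + g) * M a * M g)) =
        C * ((2 * H)⁻¹) ^ a := by
      rw [hC]
      have hℓ0 : ℓ ≠ 0 := ne_of_gt hℓ
      have hH0' : H ≠ 0 := ne_of_gt hH0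
      have hMa0 : M a ≠ 0 := ne_of_gt hMa
      field_simp
      rw [div_pow, one_div_pow, pow_add, pow_add, mul_pow, mul_pow]
      field_simp
      ring
    have hle : C * ((2 * H)⁻¹) ^ a ≤ C * (2:ℝ)⁻¹ ^ a := by
      apply mul_le_mul_of_nonneg_left _ hCnn
      apply pow_le_pow_left₀ (by positivity)
      rw [inv_le_inv₀ (by positivity) (by norm_num)]
      nlinarith
    calc ‖B (f α) (ψd (α + γ))‖ ≤ _ := hstep
      _ ≤ _ := hstep2
      _ = C * ((2 * H)⁻¹) ^ a := heq
      _ ≤ C * (2:ℝ)⁻¹ ^ a := hle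
  have hgsum : HasSum (fun α : Fin d → ℕ => C * (2:ℝ)⁻¹ ^ ∑ i, α i) (C * 2 ^ d) :=
    (aux_hasSum d).mul_left C
  have hSummable : Summable (fun α : Fin d → ℕ => ‖B (f α) (ψd (α + γ))‖) :=
    Summable.of_nonneg_of_le (fun α => norm_nonneg _) key hgsum.summable
  refine ⟨hSummable, ?_⟩
  calc ‖∑' α : Fin d → ℕ, B (f α) (ψd (α + γ))‖
      ≤ ∑' α : Fin d → ℕ, ‖B (f α) (ψd (α + γ))‖ := norm_tsum_le_tsum_norm hSummable
    _ ≤ ∑' α : Fin d → ℕ, C * (2:ℝ)⁻¹ ^ ∑ i, α i :=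
        hSummable.tsum_le_tsum key hgsum.summable
    _ = C * 2 ^ d := hgsum.tsum_eq
    _ = 2 ^ d * C₀ * ℓ ^ (∑ i, γ i) * M (∑ i, γ i) * Cf * Cg := by rw [hC]; ring
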